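/- Let k be a perfect field of characteristic p > 0, let A = k[[x_1, …, x_d]] be the formal power series ring in d ≥ 1 variables with maximal ideal m, and let f ∈ m^n ∖ m^{n+1} for some integer n ≥ 1 (i.e., f is nonzero of multiplicity n). If t is a rational number with 0 ≤ t ≤ 1/n, then f^{⌊t(p^e−1)⌋} ∉ m^{[p^e]} for every integer e ≥ 1; that is, the pair (A, t·div(f)) is F-pure. -/

import Mathlib

open MvPowerSeries

section Aux

variable {σ K : Type*} [Field K]

private lemma degAdd (u v : σ →₀ ℕ) : (u + v).degree = u.degree + v.degree := by
  simp [Finsupp.degree_eq_weight_one, map_add]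

private lemma mem_max_iff (g : MvPowerSeries σ K) :
    g ∈ IsLocalRing.maximalIdeal (MvPowerSeries σ K) ↔ constantCoeff g = 0 := by
  rw [IsLocalRing.mem_maximalIdeal, mem_nonunits_iff, MvPowerSeries.isUnit_iff_constantCoeff]
  simp [isUnit_iff_ne_zero]

private lemma order_ge_one {g : MvPowerSeries σ K}
    (h : g ∈ IsLocalRing.maximalIdeal (MvPowerSeries σ K)) : (1 : ℕ∞) ≤ g.order := by
  rw [mem_max_iff] at h
  refine le_order fun δ hδ => ?_
  have h0 : δ.degree = 0 := by
    by_contra hne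
    have : (1 : ℕ∞) ≤ (δ.degree : ℕ∞) := by
      exact_mod_cast Nat.one_le_iff_ne_zero.mpr hne
    exact absurd hδ (not_lt.mpr this)
  rw [Finsupp.degree_eq_zero_iff] at h0
  subst h0
  exact h

/-- If `g ∈ m^i` then `order g ≥ i`. -/
private lemma le_order_of_mem_pow {g : MvPowerSeries σ K} {i : ℕ}
    (h : g ∈ (IsLocalRing.maximalIdeal (MvPowerSeries σ K)) ^ i) : (i : ℕ∞) ≤ g.order := by
  induction i generalizing g with
  | zero => simp
  | succ i IH =>
    have hle : (IsLocalRing.maximalIdeal (MvPowerSeries σ K)) ^ (i + 1) ≤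
        { carrier := {g : MvPowerSeries σ K | ((i+1 : ℕ) : ℕ∞) ≤ g.order}
          add_mem' := fun ha hb => le_trans (le_min ha hb) min_order_le_add
          zero_mem' := by simp
          smul_mem' := fun c g hg => by
            simp only [smul_eq_mul, Set.mem_setOf_eq]
            calc ((i+1 : ℕ) : ℕ∞) ≤ g.order := hg
              _ ≤ c.order + g.order := le_add_self
              _ ≤ (c * g).order := le_order_mul } := by
      rw [pow_succ]
      refine Ideal.mul_le.mpr fun r hr s hs => ?_
      have h1 : (i : ℕ∞) ≤ r.order := IH hr
      have h2 : (1 : ℕ∞) ≤ s.order := order_ge_one hs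
      show ((i+1 : ℕ) : ℕ∞) ≤ (r * s).order
      calc ((i+1 : ℕ) : ℕ∞) = (i : ℕ∞) + 1 := by push_cast; rfl
        _ ≤ r.order + s.order := add_le_add h1 h2
        _ ≤ (r * s).order := le_order_mul
    exact hle h

/-- Multiplicativity of the order over a field (more generally, a domain). -/
private lemma order_mul_eq {φ ψ : MvPowerSeries σ K} (hφ : φ ≠ 0) (hψ : ψ ≠ 0) :
    (φ * ψ).order = φ.order + ψ.order := by
  classical
  refine le_antisymm ?_ le_order_mul
  obtain ⟨a, ha⟩ : ∃ a : ℕ, φ.order = (a : ℕ∞) :=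
    ⟨φ.order.toNat, (ne_zero_iff_order_finite.mp hφ).symm⟩
  obtain ⟨b, hb⟩ : ∃ b : ℕ, ψ.order = (b : ℕ∞) :=
    ⟨ψ.order.toNat, (ne_zero_iff_order_finite.mp hψ).symm⟩
  set F := homogeneousComponent (σ := σ) (R := K) a φ with hF
  set G := homogeneousComponent (σ := σ) (R := K) b ψ with hG
  have hcF : ∀ u, coeff u F = if u.degree = a then coeff u φ else 0 :=
    fun u => coeff_homogeneousComponent a u φ
  have hcG : ∀ v, coeff v G = if v.degree = b then coeff v ψ else 0 :=
    fun v => coeff_homogeneousComponent b v ψ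
  have hFne : F ≠ 0 := by
    obtain ⟨d0, hd0, hdeg⟩ := exists_coeff_ne_zero_and_order (f := φ)
      (ne_zero_iff_order_finite.mp hφ)
    rw [ha, Nat.cast_inj] at hdeg
    intro h0
    apply hd0
    have := hcF d0
    rw [h0, map_zero, if_pos hdeg] at this
    exact this.symm
  have hGne : G ≠ 0 := by
    obtain ⟨d0, hd0, hdeg⟩ := exists_coeff_ne_zero_and_order (f := ψ)
      (ne_zero_iff_order_finite.mp hψ)
    rw [hb, Nat.cast_inj] at hdeg
    intro h0
    apply hd0
    have := hcG d0
    rw [h0, map_zero, if_pos hdeg] at this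
    exact this.symm
  have hFG : F * G ≠ 0 := mul_ne_zero hFne hGne
  obtain ⟨d1, hd1⟩ : ∃ d1, coeff d1 (F * G) ≠ 0 := by
    by_contra hc
    push_neg at hc
    exact hFG (MvPowerSeries.ext hc)
  have hdeg1 : d1.degree = a + b := by
    rw [coeff_mul] at hd1
    obtain ⟨uv, huv, hne⟩ := Finset.exists_ne_zero_of_sum_ne_zero hd1
    have hu : coeff uv.1 F ≠ 0 := left_ne_zero_of_mul hne
    have hv : coeff uv.2 G ≠ 0 := right_ne_zero_of_mul hne
    rw [hcF] at hu; rw [hcG] at hv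
    have hua : uv.1.degree = a := by by_contra h; simp [h] at hu
    have hvb : uv.2.degree = b := by by_contra h; simp [h] at hv
    rw [← Finset.HasAntidiagonal.mem_antidiagonal.mp huv, degAdd, hua, hvb]
  have hkey : coeff d1 (φ * ψ) = coeff d1 (F * G) := by
    rw [coeff_mul, coeff_mul]
    refine Finset.sum_congr rfl fun uv huv => ?_
    have hsum : uv.1.degree + uv.2.degree = a + b := by
      rw [← degAdd, Finset.HasAntidiagonal.mem_antidiagonal.mp huv, hdeg1]
    rw [hcF, hcG]
    by_cases hua : uv.1.degree = a
    · have hvb : uv.2.degree = b := by omega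
      rw [if_pos hua, if_pos hvb]
    · rcases lt_or_gt_of_ne hua with hlt | hgt
      · have : coeff uv.1 φ = 0 := coeff_of_lt_order (by rw [ha]; exact_mod_cast hlt)
        rw [this, zero_mul, if_neg hua, zero_mul]
      · have hvb : uv.2.degree < b := by omega
        have : coeff uv.2 ψ = 0 := coeff_of_lt_order (by rw [hb]; exact_mod_cast hvb)
        rw [this, mul_zero, if_neg (by omega : ¬ uv.2.degree = b), mul_zero]
  have : (φ * ψ).order ≤ d1.degree := order_le (by rw [hkey]; exact hd1)
  rw [hdeg1] at this
  rw [ha, hb]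
  exact_mod_cast this

/-- If `order g ≥ i` then `g ∈ m^i` in a power series ring in finitely many variables. -/
private lemma mem_pow_of_le_order {d : ℕ} (i : ℕ) (g : MvPowerSeries (Fin d) K)
    (h : (i : ℕ∞) ≤ g.order) :
    g ∈ (IsLocalRing.maximalIdeal (MvPowerSeries (Fin d) K)) ^ i := by
  classical
  induction i generalizing g with
  | zero => simp
  | succ i IH =>
    have hg0 : constantCoeff g = 0 := by
      have : ((0 : (Fin d) →₀ ℕ).degree : ℕ∞) < g.order := by
        refine lt_of_lt_of_le ?_ h
        simp [map_zero]
      exact coeff_of_lt_order this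
    set gj : Fin d → MvPowerSeries (Fin d) K :=
      fun j δ => if (∀ l, l < j → δ l = 0) then coeff (δ + Finsupp.single j 1) g else 0 with hgj
    have hcoeff : ∀ j δ, coeff δ (gj j) =
        if (∀ l, l < j → δ l = 0) then coeff (δ + Finsupp.single j 1) g else 0 :=
      fun j δ => rfl
    have hord : ∀ j, (i : ℕ∞) ≤ (gj j).order := by
      intro j
      refine le_order fun δ hδ => ?_
      rw [hcoeff]
      split_ifs with hc
      · refine coeff_of_lt_order ?_
        refine lt_of_lt_of_le ?_ h
        rw [degAdd]
        have h1 : (Finsupp.single j 1).degree = 1 := by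
          exact Finsupp.degree_single j 1
        rw [h1]
        have : δ.degree < i := by exact_mod_cast hδ
        exact_mod_cast Nat.add_lt_add_right this 1
      · rfl
    have hrepr : g = ∑ j : Fin d, (X j : MvPowerSeries (Fin d) K) * gj j := by
      ext δ
      rw [map_sum]
      have hX : ∀ j, coeff δ ((X j : MvPowerSeries (Fin d) K) * gj j) =
          if Finsupp.single j 1 ≤ δ then coeff (δ - Finsupp.single j 1) (gj j) else 0 := by
        intro j
        rw [X, coeff_monomial_mul]
        split_ifs with hle
        · rw [one_mul]
        · rfl
      by_cases hδ0 : δ = 0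
      · subst hδ0
        rw [← coeff_zero_eq_constantCoeff] at hg0
        rw [hg0]
        refine (Finset.sum_eq_zero fun j _ => ?_).symm
        rw [hX, if_neg]
        intro hle
        have := hle j
        simp [Finsupp.single_apply] at this
      · have hsupp : δ.support.Nonempty := Finsupp.support_nonempty_iff.mpr hδ0
        set j0 := δ.support.min' hsupp with hj0
        have hj0mem : j0 ∈ δ.support := δ.support.min'_mem hsupp
        have hj0pos : 1 ≤ δ j0 := Nat.one_le_iff_ne_zero.mpr (Finsupp.mem_support_iff.mp hj0mem)
        rw [Finset.sum_eq_single j0]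
        · rw [hX, if_pos (Finsupp.single_le_iff.mpr hj0pos), hcoeff, if_pos, tsub_add_cancel_of_le
            (Finsupp.single_le_iff.mpr hj0pos)]
          intro l hl
          have hlnot : l ∉ δ.support := fun hmem => absurd hl (not_lt.mpr (δ.support.min'_le l hmem))
          have hδl : δ l = 0 := by simpa using Finsupp.notMem_support_iff.mp hlnot
          simp [Finsupp.tsub_apply, hδl]
        · intro j _ hjne
          rw [hX]
          split_ifs with hle
          · rw [hcoeff, if_neg]
            intro hc
            have hjsupp : j ∈ δ.support :=
              Finsupp.mem_support_iff.mpr (Nat.one_le_iff_ne_zero.mp (Finsupp.single_le_iff.mp hle))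
            have hj0le : j0 ≤ j := δ.support.min'_le j hjsupp
            have hlt : j0 < j := lt_of_le_of_ne hj0le fun h' => hjne h'.symm
            have hs : (Finsupp.single j (1 : ℕ)) j0 = 0 := by
              rw [Finsupp.single_apply, if_neg]
              exact fun h' => hjne h'
            have h0 := hc j0 hlt
            rw [Finsupp.tsub_apply, hs] at h0
            omega
          · rfl
        · intro hnotmem
          exact absurd (Finset.mem_univ j0) hnotmem
    rw [hrepr]
    refine Ideal.sum_mem _ fun j _ => ?_
    rw [pow_succ']
    refine Ideal.mul_mem_mul ?_ (IH _ (hord j))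
    rw [mem_max_iff]
    simp

end Aux

/-- The `q`-th bracket (Frobenius) power `J^{[q]}` of an ideal. -/
def bracketPow {R : Type*} [CommRing R] (J : Ideal R) (q : ℕ) : Ideal R :=
  Ideal.span ((fun a => a ^ q) '' (J : Set R))

/-- For `f` of multiplicity `n` in `A = k[[x₁, …, x_d]]` and `0 ≤ t ≤ 1/n`, the pair
`(A, t·div f)` is F-pure: `f^⌊t(p^e−1)⌋ ∉ m^{[p^e]}` for every `e ≥ 1`. -/
theorem stmt_13 (p : ℕ) (hp : p.Prime) (k : Type*) [Field k] [CharP k p]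
    [ExpChar k p] [PerfectRing k p] (d : ℕ) (hd : 1 ≤ d) (n : ℕ) (hn : 1 ≤ n)
    (f : MvPowerSeries (Fin d) k)
    (hf1 : f ∈ (IsLocalRing.maximalIdeal (MvPowerSeries (Fin d) k)) ^ n)
    (hf2 : f ∉ (IsLocalRing.maximalIdeal (MvPowerSeries (Fin d) k)) ^ (n + 1))
    (t : ℚ) (ht0 : 0 ≤ t) (ht : t ≤ 1 / n) :
    ∀ e : ℕ, 1 ≤ e →
      f ^ ⌊t * ((p : ℚ) ^ e - 1)⌋₊ ∉
        bracketPow (IsLocalRing.maximalIdeal (MvPowerSeries (Fin d) k)) (p ^ e) := by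
  intro e he hmem
  set m := IsLocalRing.maximalIdeal (MvPowerSeries (Fin d) k) with hm
  set q : ℕ := p ^ e with hqdef
  set a : ℕ := ⌊t * ((p : ℚ) ^ e - 1)⌋₊ with hadef
  -- arithmetic: n * a + 1 ≤ q
  have hq1 : 1 ≤ q := Nat.one_le_pow _ _ hp.pos
  have hqQ : (1 : ℚ) ≤ (q : ℚ) := by exact_mod_cast hq1
  have hpq : ((p : ℚ)) ^ e = (q : ℚ) := by push_cast [hqdef]; ring
  have hnn : (0 : ℚ) < (n : ℚ) := by exact_mod_cast hn
  have hfloor : (a : ℚ) ≤ t * ((q : ℚ) - 1) := by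
    rw [hadef, hpq]
    exact Nat.floor_le (mul_nonneg ht0 (by linarith))
  have h2 : t * ((q : ℚ) - 1) ≤ (1 / n) * ((q : ℚ) - 1) :=
    mul_le_mul_of_nonneg_right ht (by linarith)
  have hna : (n : ℚ) * a ≤ (q : ℚ) - 1 := by
    have h3 : (a : ℚ) ≤ (1 / n) * ((q : ℚ) - 1) := hfloor.trans h2
    have h4 : (n : ℚ) * a ≤ (n : ℚ) * ((1 / n) * ((q : ℚ) - 1)) :=
      mul_le_mul_of_nonneg_left h3 (le_of_lt hnn)
    calc (n : ℚ) * a ≤ (n : ℚ) * ((1 / n) * ((q : ℚ) - 1)) := h4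
      _ = (q : ℚ) - 1 := by field_simp
  have hle : n * a + 1 ≤ q := by
    have : ((n * a + 1 : ℕ) : ℚ) ≤ (q : ℚ) := by push_cast; linarith
    exact_mod_cast this
  -- f^a lies in m^(n*a+1)
  have hbr : bracketPow m q ≤ m ^ q := by
    rw [bracketPow, Ideal.span_le]
    rintro x ⟨g, hg, rfl⟩
    exact Ideal.pow_mem_pow hg q
  have hmem' : f ^ a ∈ m ^ (n * a + 1) := Ideal.pow_le_pow_right hle (hbr hmem)
  have hord1 : ((n * a + 1 : ℕ) : ℕ∞) ≤ (f ^ a).order := le_order_of_mem_pow hmem'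
  -- order f = n
  have hge : ((n : ℕ) : ℕ∞) ≤ f.order := le_order_of_mem_pow hf1
  have hle' : f.order ≤ ((n : ℕ) : ℕ∞) := by
    by_contra hc
    push_neg at hc
    have h5 : ((n + 1 : ℕ) : ℕ∞) ≤ f.order := by
      have := Order.add_one_le_of_lt hc
      push_cast
      exact this
    exact hf2 (mem_pow_of_le_order (n + 1) f h5)
  have hfo : f.order = ((n : ℕ) : ℕ∞) := le_antisymm hle' hge
  have hf0 : f ≠ 0 := by
    intro h
    rw [h, MvPowerSeries.order_zero] at hfo
    exact (by simp : (⊤ : ℕ∞) ≠ (n : ℕ∞)) hfo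
  -- order of powers
  have hpow : ∀ b : ℕ, (f ^ b).order = ((b * n : ℕ) : ℕ∞) := by
    intro b
    induction b with
    | zero =>
      simp only [pow_zero, Nat.zero_mul, Nat.cast_zero]
      refine le_antisymm ?_ zero_le
      have h1 : MvPowerSeries.coeff (0 : (Fin d) →₀ ℕ) (1 : MvPowerSeries (Fin d) k) ≠ 0 := by
        simp
      have := MvPowerSeries.order_le h1
      simpa [map_zero] using this
    | succ b IHb =>
      rw [pow_succ, order_mul_eq (pow_ne_zero b hf0) hf0, IHb, hfo]
      push_cast
      ring
  rw [hpow a] at hord1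
  have hcontra : n * a + 1 ≤ a * n := by exact_mod_cast hord1
  rw [mul_comm a n] at hcontra
  omega
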